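/- Let (M, 𝒜, m) be a measure space and let L : L¹(m; ℝ) → L¹(m; ℝ) be a linear map that is positive (if 0 ≤ φ almost everywhere then 0 ≤ Lφ almost everywhere) and preserves integrals (∫_M Lφ dm = ∫_M φ dm for every φ ∈ L¹(m)). If φ ∈ L¹(m) satisfies Lφ = φ, then the positive and negative parts of φ are also fixed: L(φ⁺) = φ⁺ and L(φ⁻) = φ⁻, where φ⁺ = max{φ, 0} and φ⁻ = max{−φ, 0}. -/
import Mathlib


open MeasureTheory

lemma fix_pos_aux {M : Type*} [MeasurableSpace M] (m : Measure M)
    (L : Lp ℝ 1 m →ₗ[ℝ] Lp ℝ 1 m)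
    (hpos : ∀ φ : Lp ℝ 1 m, 0 ≤ φ → 0 ≤ L φ)
    (hint : ∀ φ : Lp ℝ 1 m, ∫ x, (L φ) x ∂m = ∫ x, φ x ∂m)
    (φ : Lp ℝ 1 m) (hfix : L φ = φ) : L (φ ⊔ 0) = φ ⊔ 0 := by
  set ψ : Lp ℝ 1 m := L (φ ⊔ 0) - (φ ⊔ 0) with hψ
  have hle : φ ⊔ 0 ≤ L (φ ⊔ 0) := by
    refine sup_le ?_ ?_
    · have h1 : 0 ≤ L (φ ⊔ 0) - L φ := by
        have := hpos (φ ⊔ 0 - φ) (by simpa using sub_nonneg.mpr (le_sup_left : φ ≤ φ ⊔ 0))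
        simpa [map_sub] using this
      have := sub_nonneg.mp h1
      rwa [hfix] at this
    · exact hpos _ le_sup_right
  have hψnn : 0 ≤ ψ := sub_nonneg.mpr hle
  have hψae : (0 : M → ℝ) ≤ᵐ[m] ψ := (Lp.coeFn_nonneg ψ).mpr hψnn
  have hint0 : ∫ x, ψ x ∂m = 0 := by
    have hsub : ∫ x, ψ x ∂m
        = ∫ x, (L (φ ⊔ 0)) x ∂m - ∫ x, (φ ⊔ 0 : Lp ℝ 1 m) x ∂m := by
      rw [integral_congr_ae (Lp.coeFn_sub (L (φ ⊔ 0)) (φ ⊔ 0))]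
      exact integral_sub (L1.integrable_coeFn _) (L1.integrable_coeFn _)
    rw [hsub, hint]
    ring
  have hψ0 : ψ = 0 := by
    rw [Lp.eq_zero_iff_ae_eq_zero]
    exact (integral_eq_zero_iff_of_nonneg_ae hψae (L1.integrable_coeFn ψ)).mp hint0
  have := sub_eq_zero.mp hψ0
  exact this

theorem positive_integral_preserving_fixes_pos_neg_parts
    {M : Type*} [MeasurableSpace M] (m : Measure M)
    (L : Lp ℝ 1 m →ₗ[ℝ] Lp ℝ 1 m)
    (hpos : ∀ φ : Lp ℝ 1 m, 0 ≤ φ → 0 ≤ L φ)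
    (hint : ∀ φ : Lp ℝ 1 m, ∫ x, (L φ) x ∂m = ∫ x, φ x ∂m)
    (φ : Lp ℝ 1 m) (hfix : L φ = φ) :
    L (φ ⊔ 0) = φ ⊔ 0 ∧ L ((-φ) ⊔ 0) = (-φ) ⊔ 0 := by
  have hp := fix_pos_aux m L hpos hint φ hfix
  refine ⟨hp, ?_⟩
  have h2 : (-φ) ⊔ 0 = (φ ⊔ 0) - φ := by
    have h := posPart_sub_negPart φ
    rw [posPart_def, negPart_def] at h
    exact eq_sub_of_add_eq (sub_eq_iff_eq_add'.mp h).symm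
  rw [h2, map_sub, hp, hfix]
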